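/- Let n ≥ 1 and σ > 0, and set γ₊ = [[−σ·Iₙ, 0], [0, 1]]. Then { a ∈ GL(n+1, ℝ) : aᵀ γ₊ a = λ·γ₊ for some λ > 0 } = { √λ · k · exp(Z) : λ > 0, k ∈ K, Z ∈ 𝔭_σ }. -/

import Mathlib

open Matrix

noncomputable section

abbrev Idx (n : ℕ) := Fin n ⊕ Unit

/-- K = { [[R,0],[0,ε]] : R ∈ O(n), ε = ±1 } -/
def Kset (n : ℕ) : Set (Matrix (Idx n) (Idx n) ℝ) :=
  { m | ∃ (R : Matrix (Fin n) (Fin n) ℝ) (ε : ℝ),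
      Rᵀ * R = 1 ∧ (ε = 1 ∨ ε = -1) ∧
      m = fromBlocks R 0 0 (ε • (1 : Matrix Unit Unit ℝ)) }

/-- 𝔭_σ -/
def pSet (n : ℕ) (σ : ℝ) : Set (Matrix (Idx n) (Idx n) ℝ) :=
  { m | ∃ b : Fin n → ℝ,
      m = fromBlocks 0 (replicateCol Unit b) (σ • replicateRow Unit b) 0 }

/-- γ₊ = [[−σ·Iₙ, 0], [0, 1]] -/
def gammaPlus (n : ℕ) (σ : ℝ) : Matrix (Idx n) (Idx n) ℝ :=
  fromBlocks ((-σ) • (1 : Matrix (Fin n) (Fin n) ℝ)) 0 0 (1 : Matrix Unit Unit ℝ)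

namespace StAux

open NormedSpace Nat

/-! ### general exponential lemmas in a Banach algebra -/

section BanachAlg

variable {𝔸 : Type*} [NormedRing 𝔸] [NormedAlgebra ℝ 𝔸] [CompleteSpace 𝔸]

theorem exp_smul_idem (t : ℝ) (P : 𝔸) (hP : P * P = P) :
    exp (t • P) = 1 + (Real.exp t - 1) • P := by
  have hPpow : ∀ k : ℕ, P ^ (k + 1) = P := by
    intro k
    induction k with
    | zero => simp
    | succ k ih => rw [pow_succ, ih, hP]
  have h1 : (fun k : ℕ => ((k ! : ℝ))⁻¹ • (t • P) ^ k) =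
      fun k : ℕ => ((k ! : ℝ)⁻¹ * t ^ k) • P ^ k := by
    funext k; rw [smul_pow, smul_smul]
  have hsum : Summable fun k : ℕ => ((k ! : ℝ)⁻¹ * t ^ k) • P ^ k := by
    rw [← h1]; exact expSeries_summable' (𝕂 := ℝ) (t • P)
  have hsc : Summable fun k : ℕ => ((k+1)! : ℝ)⁻¹ * t ^ (k+1) := by
    have : Summable fun k : ℕ => ((k ! : ℝ))⁻¹ * t ^ k := by
      simpa [div_eq_inv_mul] using Real.summable_pow_div_factorial t
    exact (this.comp_injective (add_left_injective 1)).congr (by intro k; simp)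
  have hexp : Real.exp t = 1 + ∑' k : ℕ, (((k+1)! : ℝ))⁻¹ * t ^ (k+1) := by
    have : Summable fun k : ℕ => ((k ! : ℝ))⁻¹ * t ^ k := by
      simpa [div_eq_inv_mul] using Real.summable_pow_div_factorial t
    have h := this.tsum_eq_zero_add
    rw [Real.exp_eq_exp_ℝ, exp_eq_tsum ℝ]
    simp only [smul_eq_mul] at h ⊢
    rw [h]; simp
  calc exp (t • P) = ∑' k : ℕ, ((k ! : ℝ))⁻¹ • (t • P) ^ k := by rw [exp_eq_tsum ℝ]
    _ = ∑' k : ℕ, ((k ! : ℝ)⁻¹ * t ^ k) • P ^ k := by rw [h1]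
    _ = ((0! : ℝ)⁻¹ * t ^ 0) • P ^ 0 + ∑' k : ℕ, (((k+1)! : ℝ)⁻¹ * t ^ (k+1)) • P ^ (k+1) :=
        hsum.tsum_eq_zero_add
    _ = 1 + (∑' k : ℕ, (((k+1)! : ℝ)⁻¹ * t ^ (k+1))) • P := by
        rw [tsum_congr (fun k => by rw [hPpow k]), hsc.tsum_smul_const P]
        simp
    _ = 1 + (Real.exp t - 1) • P := by rw [hexp, add_sub_cancel_left]

theorem exp_cube (θ : ℝ) (hθ : θ ≠ 0) (Z : 𝔸) (h3 : Z * Z * Z = (θ^2) • Z) :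
    exp Z = 1 + (Real.sinh θ / θ) • Z + ((Real.cosh θ - 1) / θ^2) • (Z * Z) := by
  have hZQ : Z * (Z * Z) = θ^2 • Z := by rw [← mul_assoc]; exact h3
  have hQQ : (Z * Z) * (Z * Z) = θ^2 • (Z * Z) := by
    rw [← mul_assoc, h3, smul_mul_assoc]
  obtain ⟨c, hc⟩ : ∃ c : ℝ, c = (2 * θ^2)⁻¹ := ⟨_, rfl⟩
  obtain ⟨Pp, hPp⟩ : ∃ Pp : 𝔸, Pp = c • (Z * Z + θ • Z) := ⟨_, rfl⟩
  obtain ⟨Pm, hPm⟩ : ∃ Pm : 𝔸, Pm = c • (Z * Z - θ • Z) := ⟨_, rfl⟩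
  have h2θ : (2 * θ^2) ≠ 0 := by positivity
  have hcc : c * (2 * θ^2) = 1 := by rw [hc]; exact inv_mul_cancel₀ h2θ
  have hA : (Z * Z + θ • Z) * (Z * Z + θ • Z) = (2 * θ^2) • (Z * Z + θ • Z) := by
    simp only [mul_add, add_mul, smul_mul_assoc, mul_smul_comm, hQQ, hZQ, h3, smul_smul]
    match_scalars <;> ring
  have hB : (Z * Z - θ • Z) * (Z * Z - θ • Z) = (2 * θ^2) • (Z * Z - θ • Z) := by
    simp only [mul_sub, sub_mul, smul_mul_assoc, mul_smul_comm, hQQ, hZQ, h3, smul_smul]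
    match_scalars <;> ring
  have hAB : (Z * Z + θ • Z) * (Z * Z - θ • Z) = 0 := by
    simp only [mul_sub, sub_mul, mul_add, add_mul, smul_mul_assoc, mul_smul_comm,
      hQQ, hZQ, h3, smul_smul]
    match_scalars <;> ring
  have hBA : (Z * Z - θ • Z) * (Z * Z + θ • Z) = 0 := by
    simp only [mul_sub, sub_mul, mul_add, add_mul, smul_mul_assoc, mul_smul_comm,
      hQQ, hZQ, h3, smul_smul]
    match_scalars <;> ring
  have hPpPp : Pp * Pp = Pp := by
    rw [hPp, smul_mul_smul_comm, hA, smul_smul, mul_comm c, mul_assoc, hcc, mul_one]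
  have hPmPm : Pm * Pm = Pm := by
    rw [hPm, smul_mul_smul_comm, hB, smul_smul, mul_comm c, mul_assoc, hcc, mul_one]
  have hPpPm : Pp * Pm = 0 := by rw [hPp, hPm, smul_mul_smul_comm, hAB, smul_zero]
  have hPmPp : Pm * Pp = 0 := by rw [hPm, hPp, smul_mul_smul_comm, hBA, smul_zero]
  have hdecomp : Z = θ • Pp + (-θ) • Pm := by
    rw [hPp, hPm, hc]
    match_scalars <;> field_simp <;> ring
  have hcomm : Commute (θ • Pp) ((-θ) • Pm) := by
    have h1 : (θ • Pp) * ((-θ) • Pm) = (θ * -θ) • (Pp * Pm) := smul_mul_smul_comm _ _ _ _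
    have h2 : ((-θ) • Pm) * (θ • Pp) = (-θ * θ) • (Pm * Pp) := smul_mul_smul_comm _ _ _ _
    show _ = _
    rw [h1, h2, hPpPm, hPmPp, smul_zero, smul_zero]
  calc exp Z = exp (θ • Pp) * exp ((-θ) • Pm) := by
        rw [hdecomp]
        exact exp_add_of_commute_of_mem_ball (𝕂 := ℝ) hcomm
          ((expSeries_radius_eq_top ℝ 𝔸).symm ▸ edist_lt_top _ _)
          ((expSeries_radius_eq_top ℝ 𝔸).symm ▸ edist_lt_top _ _)
    _ = (1 + (Real.exp θ - 1) • Pp) * (1 + (Real.exp (-θ) - 1) • Pm) := by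
        rw [exp_smul_idem θ Pp hPpPp, exp_smul_idem (-θ) Pm hPmPm]
    _ = 1 + (Real.exp θ - 1) • Pp + (Real.exp (-θ) - 1) • Pm := by
        rw [mul_add, mul_one, add_mul, one_mul, smul_mul_smul_comm, hPpPm, smul_zero,
          add_zero]
    _ = 1 + (Real.sinh θ / θ) • Z + ((Real.cosh θ - 1) / θ^2) • (Z * Z) := by
        rw [hPp, hPm, hc, Real.sinh_eq, Real.cosh_eq]
        match_scalars <;> field_simp <;> ring

end BanachAlg

/-! ### matrix versions -/

section MatVersions

variable {m : Type*} [Fintype m] [DecidableEq m]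

theorem mat_exp_smul_idem (t : ℝ) (P : Matrix m m ℝ) (hP : P * P = P) :
    exp (t • P) = 1 + (Real.exp t - 1) • P := by
  letI : SeminormedRing (Matrix m m ℝ) := Matrix.linftyOpSemiNormedRing
  letI : NormedRing (Matrix m m ℝ) := Matrix.linftyOpNormedRing
  letI : NormedAlgebra ℝ (Matrix m m ℝ) := Matrix.linftyOpNormedAlgebra
  exact exp_smul_idem t P hP

theorem mat_exp_cube (θ : ℝ) (hθ : θ ≠ 0) (Z : Matrix m m ℝ) (h3 : Z * Z * Z = (θ^2) • Z) :
    exp Z = 1 + (Real.sinh θ / θ) • Z + ((Real.cosh θ - 1) / θ^2) • (Z * Z) := by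
  letI : SeminormedRing (Matrix m m ℝ) := Matrix.linftyOpSemiNormedRing
  letI : NormedRing (Matrix m m ℝ) := Matrix.linftyOpNormedRing
  letI : NormedAlgebra ℝ (Matrix m m ℝ) := Matrix.linftyOpNormedAlgebra
  exact exp_cube θ hθ Z h3

theorem mat_exp_neg_mul (Z : Matrix m m ℝ) : exp (-Z) * exp Z = 1 := by
  rw [← Matrix.exp_add_of_commute _ _ (Commute.refl Z).neg_left, neg_add_cancel, exp_zero]

end MatVersions

/-! ### structural matrix lemmas -/

variable {n : ℕ} {σ : ℝ}

def Zb (n : ℕ) (σ : ℝ) (b : Fin n → ℝ) : Matrix (Idx n) (Idx n) ℝ :=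
  fromBlocks 0 (replicateCol Unit b) (σ • replicateRow Unit b) 0

theorem Zb_mem (b : Fin n → ℝ) : Zb n σ b ∈ pSet n σ := ⟨b, rfl⟩

theorem Zb_neg (b : Fin n → ℝ) : Zb n σ (-b) = - Zb n σ b := by
  ext (i|i) (j|j) <;> simp [Zb, fromBlocks, Matrix.neg_apply]

theorem row_mul_col_eq (b c : Fin n → ℝ) :
    replicateRow Unit b * replicateCol Unit c = (b ⬝ᵥ c) • (1 : Matrix Unit Unit ℝ) := by
  ext i j
  rw [replicateRow_mul_replicateCol_apply, Matrix.smul_apply, Subsingleton.elim i j, Matrix.one_apply_eq,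
    smul_eq_mul, mul_one]

theorem Zb_sq (b : Fin n → ℝ) :
    Zb n σ b * Zb n σ b =
      fromBlocks (σ • (replicateCol Unit b * replicateRow Unit b)) 0 0 ((σ * (b ⬝ᵥ b)) • 1) := by
  rw [Zb, fromBlocks_multiply, fromBlocks_inj]
  refine ⟨?_, ?_, ?_, ?_⟩
  · rw [Matrix.zero_mul, zero_add, Matrix.mul_smul]
  · simp
  · simp
  · rw [Matrix.mul_zero, add_zero, Matrix.smul_mul, row_mul_col_eq, smul_smul]

theorem Zb_cube (b : Fin n → ℝ) :
    Zb n σ b * Zb n σ b * Zb n σ b = (σ * (b ⬝ᵥ b)) • Zb n σ b := by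
  rw [Zb_sq]
  conv_lhs => rw [Zb]
  conv_rhs => rw [Zb]
  rw [fromBlocks_multiply, fromBlocks_smul, fromBlocks_inj]
  refine ⟨by simp, ?_, ?_, by simp⟩
  · rw [Matrix.zero_mul, add_zero, Matrix.smul_mul, Matrix.mul_assoc, row_mul_col_eq,
      Matrix.mul_smul, Matrix.mul_one, smul_smul]
  · rw [Matrix.mul_zero, zero_add, Matrix.smul_mul, Matrix.one_mul, smul_smul]

def gammaInv (n : ℕ) (σ : ℝ) : Matrix (Idx n) (Idx n) ℝ :=
  fromBlocks ((-σ⁻¹) • (1 : Matrix (Fin n) (Fin n) ℝ)) 0 0 (1 : Matrix Unit Unit ℝ)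

theorem gamma_mul_gammaInv (hσ : σ ≠ 0) : gammaPlus n σ * gammaInv n σ = 1 := by
  rw [gammaPlus, gammaInv, fromBlocks_multiply, ← fromBlocks_one]
  congr 1 <;> simp [smul_smul, hσ]

theorem gammaInv_mul_gamma (hσ : σ ≠ 0) : gammaInv n σ * gammaPlus n σ = 1 := by
  rw [gammaPlus, gammaInv, fromBlocks_multiply, ← fromBlocks_one]
  congr 1 <;> simp [smul_smul, hσ]

theorem Zb_transpose_conj (hσ : σ ≠ 0) (b : Fin n → ℝ) :
    (Zb n σ b)ᵀ = gammaPlus n σ * (- Zb n σ b) * gammaInv n σ := by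
  have h1 : gammaPlus n σ * (- Zb n σ b) =
      fromBlocks 0 (σ • replicateCol Unit b) ((-σ) • replicateRow Unit b) 0 := by
    rw [← Zb_neg, gammaPlus, Zb, fromBlocks_multiply, fromBlocks_inj]
    refine ⟨by simp, ?_, ?_, by simp⟩
    · ext i j; simp [Matrix.mul_apply, replicateCol, Matrix.one_apply]
    · ext i j; simp [Matrix.mul_apply, replicateRow]
  have h2 : (fromBlocks 0 (σ • replicateCol Unit b) ((-σ) • replicateRow Unit b) 0 : Matrix (Idx n) (Idx n) ℝ) *
      gammaInv n σ = fromBlocks 0 (σ • replicateCol Unit b) (replicateRow Unit b) 0 := by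
    rw [gammaInv, fromBlocks_multiply, fromBlocks_inj]
    refine ⟨by simp, by simp, ?_, by simp⟩
    ext i j
    simp [Matrix.mul_apply, replicateRow, Matrix.one_apply]
    field_simp
  rw [h1, h2, Zb, fromBlocks_transpose, transpose_replicateCol, transpose_smul, transpose_replicateRow]
  simp

theorem exp_Zb_gamma (hσ : σ ≠ 0) (b : Fin n → ℝ) :
    (exp (Zb n σ b))ᵀ * gammaPlus n σ * exp (Zb n σ b) = gammaPlus n σ := by
  have hγu : IsUnit (gammaPlus n σ) :=
    isUnit_iff_exists.mpr ⟨gammaInv n σ, gamma_mul_gammaInv hσ, gammaInv_mul_gamma hσ⟩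
  have hγi : (gammaPlus n σ)⁻¹ = gammaInv n σ := Matrix.inv_eq_right_inv (gamma_mul_gammaInv hσ)
  have h1 : exp ((Zb n σ b)ᵀ) = gammaPlus n σ * exp (- Zb n σ b) * gammaInv n σ := by
    rw [Zb_transpose_conj hσ b, ← hγi, Matrix.exp_conj _ _ hγu, hγi]
  rw [← Matrix.exp_transpose, h1, mul_assoc (gammaPlus n σ * exp (- Zb n σ b)),
    mul_assoc (gammaPlus n σ * exp (- Zb n σ b)), gammaInv_mul_gamma hσ, one_mul,
    mul_assoc, mat_exp_neg_mul, mul_one]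

theorem K_gamma (R : Matrix (Fin n) (Fin n) ℝ) (ε : ℝ) (hR : Rᵀ * R = 1) (hε : ε * ε = 1) :
    (fromBlocks R 0 0 (ε • (1 : Matrix Unit Unit ℝ)))ᵀ * gammaPlus n σ *
      fromBlocks R 0 0 (ε • (1 : Matrix Unit Unit ℝ)) = gammaPlus n σ := by
  rw [fromBlocks_transpose, gammaPlus, fromBlocks_multiply, fromBlocks_multiply, fromBlocks_inj]
  refine ⟨?_, by simp, by simp, ?_⟩
  · simp only [transpose_zero, Matrix.mul_zero, Matrix.zero_mul, add_zero, zero_add,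
      Matrix.mul_smul, Matrix.smul_mul, Matrix.mul_one, hR]
  · simp only [transpose_zero, transpose_smul, transpose_one, Matrix.mul_zero, Matrix.zero_mul,
      add_zero, zero_add, Matrix.smul_mul, Matrix.mul_smul, Matrix.one_mul, smul_smul, hε,
      one_smul]

theorem K_isUnit (R : Matrix (Fin n) (Fin n) ℝ) (ε : ℝ) (hR : Rᵀ * R = 1) (hε : ε * ε = 1) :
    IsUnit (fromBlocks R 0 0 (ε • (1 : Matrix Unit Unit ℝ))) := by
  refine isUnit_iff_exists.mpr ⟨fromBlocks Rᵀ 0 0 (ε • (1 : Matrix Unit Unit ℝ)), ?_, ?_⟩ <;>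
  · rw [fromBlocks_multiply, ← fromBlocks_one]
    congr 1 <;>
      simp [mul_eq_one_comm.mp hR, hR, smul_smul, hε]

theorem mem_K_of (hσ : σ ≠ 0) (h : Matrix (Idx n) (Idx n) ℝ)
    (hh : hᵀ * gammaPlus n σ * h = gammaPlus n σ)
    (hrow : ∀ i, h (Sum.inr ()) (Sum.inl i) = 0) :
    ∃ (R : Matrix (Fin n) (Fin n) ℝ) (ε : ℝ),
      Rᵀ * R = 1 ∧ (ε = 1 ∨ ε = -1) ∧
      h = fromBlocks R 0 0 (ε • (1 : Matrix Unit Unit ℝ)) := by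
  have hC : h.toBlocks₂₁ = 0 := by
    ext i j
    exact hrow j
  have hsplit : h = fromBlocks h.toBlocks₁₁ h.toBlocks₁₂ 0 h.toBlocks₂₂ := by
    rw [← hC, fromBlocks_toBlocks]
  set A := h.toBlocks₁₁
  set B := h.toBlocks₁₂
  set D := h.toBlocks₂₂
  rw [hsplit, gammaPlus, fromBlocks_transpose, fromBlocks_multiply, fromBlocks_multiply,
    fromBlocks_inj] at hh
  obtain ⟨e11, e12, -, e22⟩ := hh
  simp only [transpose_zero, Matrix.mul_zero, Matrix.zero_mul, add_zero, zero_add,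
    Matrix.mul_smul, Matrix.smul_mul, Matrix.mul_one, Matrix.one_mul] at e11 e12 e22
  have hAA : Aᵀ * A = 1 := by
    have := smul_right_injective (Matrix (Fin n) (Fin n) ℝ) (neg_ne_zero.mpr hσ)
    exact this e11
  have hAB : Aᵀ * B = 0 := by
    rcases smul_eq_zero.mp e12 with h' | h'
    · exact absurd (neg_eq_zero.mp h') hσ
    · exact h'
  have hB : B = 0 := by
    calc B = (A * Aᵀ) * B := by rw [mul_eq_one_comm.mp hAA, Matrix.one_mul]
      _ = A * (Aᵀ * B) := by rw [Matrix.mul_assoc]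
      _ = 0 := by rw [hAB, Matrix.mul_zero]
  rw [hB] at e22
  simp only [transpose_zero, Matrix.mul_zero, Matrix.zero_mul, smul_zero, zero_add] at e22
  set ε := D () ()
  have hεε : ε * ε = 1 := by
    have := congrFun (congrFun e22 ()) ()
    simpa [Matrix.mul_apply] using this
  have hD : D = ε • (1 : Matrix Unit Unit ℝ) := by
    ext i j
    rw [Subsingleton.elim i (), Subsingleton.elim j ()]
    simp [ε]
  exact ⟨A, ε, hAA, mul_self_eq_one_iff.mp hεε, by rw [hsplit, hB, hD]⟩

theorem scalar_cosh_sq (σ C d e : ℝ) (hσ : 0 < σ) (hee : e * e = 1)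
    (hd2' : d * d * σ = σ + C * C) :
    1 + (e * C / Real.sqrt σ)^2 = (e * d)^2 := by
  have hσσ : Real.sqrt σ * Real.sqrt σ = σ := Real.mul_self_sqrt hσ.le
  have hsne : Real.sqrt σ ≠ 0 := (Real.sqrt_pos.mpr hσ).ne'
  rw [div_pow, show (Real.sqrt σ)^2 = σ by rw [sq, hσσ]]
  field_simp
  linear_combination (-(e*e)) * hd2' + (-σ) * hee

theorem scalar_tau_sq (σ C τ : ℝ) (hσ : 0 < σ) (hC : 0 < C) :
    σ * ((τ / (Real.sqrt σ * C)) * (τ / (Real.sqrt σ * C)) * (C * C)) = τ^2 := by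
  have hσσ : Real.sqrt σ * Real.sqrt σ = σ := Real.mul_self_sqrt hσ.le
  have hne : Real.sqrt σ * C ≠ 0 := by positivity
  field_simp
  linear_combination (-(τ^2)) * hσσ

end StAux

open StAux NormedSpace

theorem stmt13 (n : ℕ) (hn : 1 ≤ n) (σ : ℝ) (hσ : 0 < σ) :
    { a : Matrix (Idx n) (Idx n) ℝ | IsUnit a ∧ ∃ l : ℝ, 0 < l ∧
        aᵀ * gammaPlus n σ * a = l • gammaPlus n σ } =
    { a : Matrix (Idx n) (Idx n) ℝ | ∃ l : ℝ, 0 < l ∧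
        ∃ k ∈ Kset n, ∃ Z ∈ pSet n σ,
          a = Real.sqrt l • (k * NormedSpace.exp Z) } := by
  have hσ0 : σ ≠ 0 := ne_of_gt hσ
  ext a
  simp only [Set.mem_setOf_eq]
  constructor
  · rintro ⟨hau, l, hl, heq⟩
    refine ⟨l, hl, ?_⟩
    set s := Real.sqrt l with hs_def
    have hs : 0 < s := Real.sqrt_pos.mpr hl
    have hss : s * s = l := Real.mul_self_sqrt hl.le
    set g := s⁻¹ • a with hg_def
    have hag : a = s • g := by
      rw [hg_def, smul_smul, mul_inv_cancel₀ hs.ne', one_smul]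
    have hgγ : gᵀ * gammaPlus n σ * g = gammaPlus n σ := by
      rw [hg_def, transpose_smul, Matrix.smul_mul, Matrix.smul_mul, Matrix.mul_smul,
        heq, smul_smul, smul_smul]
      have h5 : s⁻¹ * s⁻¹ * l = 1 := by
        rw [← hss]; field_simp
      rw [h5, one_smul]
    -- it suffices to decompose g
    suffices hdec : ∃ k ∈ Kset n, ∃ Z ∈ pSet n σ, g = k * NormedSpace.exp Z by
      obtain ⟨k, hkK, Z, hZp, hgkZ⟩ := hdec
      exact ⟨k, hkK, Z, hZp, by rw [hag, hgkZ]⟩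
    -- the dual relation
    have hright : g * (gammaInv n σ * gᵀ * gammaPlus n σ) = 1 := by
      refine mul_eq_one_comm.mpr ?_
      calc gammaInv n σ * gᵀ * gammaPlus n σ * g
          = gammaInv n σ * (gᵀ * gammaPlus n σ * g) := by simp only [mul_assoc]
        _ = 1 := by rw [hgγ, gammaInv_mul_gamma hσ0]
    have hdual : g * (gammaInv n σ * gᵀ) = gammaInv n σ := by
      have h6 : g * gammaInv n σ * gᵀ * gammaPlus n σ = 1 := by
        calc g * gammaInv n σ * gᵀ * gammaPlus n σ
            = g * (gammaInv n σ * gᵀ * gammaPlus n σ) := by simp only [mul_assoc]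
          _ = 1 := hright
      have h7 : g * gammaInv n σ * gᵀ * (gammaPlus n σ * gammaInv n σ) = gammaInv n σ := by
        rw [← mul_assoc, h6, one_mul]
      rw [gamma_mul_gammaInv hσ0, mul_one] at h7
      rw [← mul_assoc]
      exact h7
    set c : Fin n → ℝ := fun i => g (Sum.inr ()) (Sum.inl i) with hc_def
    set d : ℝ := g (Sum.inr ()) (Sum.inr ()) with hd_def
    have hdd : d * d - σ⁻¹ * (c ⬝ᵥ c) = 1 := by
      have h8 := congrFun (congrFun hdual (Sum.inr ())) (Sum.inr ())
      have h9 : ∀ x : Idx n, (gammaInv n σ * gᵀ) x (Sum.inr ()) =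
          Sum.elim (fun i => -σ⁻¹ * c i) (fun _ => d) x := by
        rintro (i | u)
        · simp [gammaInv, Matrix.mul_apply, Fintype.sum_sum_type, Matrix.one_apply,
            Finset.mul_sum, hc_def]
        · simp [gammaInv, Matrix.mul_apply, Fintype.sum_sum_type, hd_def]
      rw [Matrix.mul_apply] at h8
      rw [Finset.sum_congr rfl (fun x _ => by rw [h9 x])] at h8
      rw [Fintype.sum_sum_type] at h8
      simp only [Sum.elim_inl, Sum.elim_inr] at h8
      simp only [gammaInv, fromBlocks_apply₂₂, Matrix.one_apply_eq, Finset.sum_const] at h8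
      have h10 : ∑ x, c x * (-σ⁻¹ * c x) = -(σ⁻¹ * (c ⬝ᵥ c)) := by
        rw [dotProduct, Finset.mul_sum, ← Finset.sum_neg_distrib]
        exact Finset.sum_congr rfl fun x _ => by ring
      have h8' : ∑ x : Fin n, c x * (-σ⁻¹ * c x) + ∑ _x : Unit, d * d = 1 := h8
      rw [h10] at h8'
      simp only [Finset.univ_unique, Finset.sum_const, Finset.card_singleton, one_smul] at h8'
      linarith [h8']
    have hC2nn : 0 ≤ c ⬝ᵥ c := Finset.sum_nonneg fun i _ => mul_self_nonneg (c i)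
    by_cases hC2 : c ⬝ᵥ c = 0
    · -- degenerate case : bottom-left row of g already vanishes
      have hci : ∀ i, g (Sum.inr ()) (Sum.inl i) = 0 := by
        intro i
        have h11 := (Finset.sum_eq_zero_iff_of_nonneg
          (fun i _ => mul_self_nonneg (c i))).mp hC2 i (Finset.mem_univ i)
        exact mul_self_eq_zero.mp h11
      obtain ⟨R, ε, hR, hε, hgK⟩ := mem_K_of hσ0 g hgγ hci
      refine ⟨g, ⟨R, ε, hR, hε, hgK⟩, 0, ⟨0, ?_⟩, by rw [NormedSpace.exp_zero, mul_one]⟩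
      ext (i | i) (j | j) <;> simp [fromBlocks, replicateCol, replicateRow]
    · -- main case
      have hC2pos : 0 < c ⬝ᵥ c := lt_of_le_of_ne hC2nn (Ne.symm hC2)
      set C := Real.sqrt (c ⬝ᵥ c) with hC_def
      have hC : 0 < C := Real.sqrt_pos.mpr hC2pos
      have hCC : C * C = c ⬝ᵥ c := Real.mul_self_sqrt hC2nn
      have hrootσ : 0 < Real.sqrt σ := Real.sqrt_pos.mpr hσ
      have hσσ : Real.sqrt σ * Real.sqrt σ = σ := Real.mul_self_sqrt hσ.le
      have hd2 : d * d = 1 + σ⁻¹ * (c ⬝ᵥ c) := by linarith [hdd]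
      have hd2' : d * d * σ = σ + C * C := by
        rw [hCC]
        have h12 : σ⁻¹ * (c ⬝ᵥ c) * σ = c ⬝ᵥ c := by
          field_simp
        nlinarith [hd2, h12]
      have hσinvpos : 0 < σ⁻¹ * (c ⬝ᵥ c) := by positivity
      have hdne : d ≠ 0 := by
        intro h
        rw [h] at hd2
        nlinarith
      set e : ℝ := if 0 < d then 1 else -1 with he_def
      have hee : e * e = 1 := by rw [he_def]; split_ifs <;> norm_num
      have hed : e * d = |d| := by
        rw [he_def]
        split_ifs with h
        · rw [abs_of_pos h, one_mul]
        · rw [abs_of_nonpos (le_of_not_gt h)]; ring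
      have hedpos : 0 < e * d := by rw [hed]; exact abs_pos.mpr hdne
      set τ := Real.arsinh (e * C / Real.sqrt σ) with hτ_def
      have hsinh : Real.sinh τ = e * C / Real.sqrt σ := Real.sinh_arsinh _
      have hcosh : Real.cosh τ = e * d := by
        rw [hτ_def, Real.cosh_arsinh, scalar_cosh_sq σ C d e hσ hee hd2',
          Real.sqrt_sq hedpos.le]
      have hτne : τ ≠ 0 := by
        intro h
        rw [h, Real.sinh_zero] at hsinh
        have h2 : e * C / Real.sqrt σ ≠ 0 := by
          apply div_ne_zero _ hrootσ.ne'
          intro h3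
          rcases mul_eq_zero.mp h3 with h4 | h4
          · rw [h4] at hee; norm_num at hee
          · exact hC.ne' h4
        exact h2 hsinh.symm
      set u := τ / (Real.sqrt σ * C) with hu_def
      set b := u • c with hb_def
      have hbb : b ⬝ᵥ b = u * u * (c ⬝ᵥ c) := by
        rw [hb_def, smul_dotProduct, dotProduct_smul, smul_eq_mul, smul_eq_mul]
        ring
      have hθτ : σ * (b ⬝ᵥ b) = τ^2 := by
        rw [hbb, hu_def, ← hCC]
        exact scalar_tau_sq σ C τ hσ hC
      have hmb : σ * ((-b) ⬝ᵥ (-b)) = τ^2 := by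
        rw [neg_dotProduct, dotProduct_neg, neg_neg]; exact hθτ
      have hE : NormedSpace.exp (Zb n σ (-b)) =
          1 + (Real.sinh τ / τ) • Zb n σ (-b) +
            ((Real.cosh τ - 1) / τ^2) • (Zb n σ (-b) * Zb n σ (-b)) :=
        mat_exp_cube τ hτne _ (by rw [Zb_cube, hmb])
      set k := g * NormedSpace.exp (Zb n σ (-b)) with hk_def
      have hkg : k * NormedSpace.exp (Zb n σ b) = g := by
        rw [hk_def, mul_assoc, Zb_neg, mat_exp_neg_mul, mul_one]
      have hkγ : kᵀ * gammaPlus n σ * k = gammaPlus n σ := by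
        rw [hk_def, transpose_mul]
        calc (NormedSpace.exp (Zb n σ (-b)))ᵀ * gᵀ * gammaPlus n σ *
              (g * NormedSpace.exp (Zb n σ (-b)))
            = (NormedSpace.exp (Zb n σ (-b)))ᵀ * (gᵀ * gammaPlus n σ * g) *
              NormedSpace.exp (Zb n σ (-b)) := by simp only [mul_assoc]
          _ = (NormedSpace.exp (Zb n σ (-b)))ᵀ * gammaPlus n σ *
              NormedSpace.exp (Zb n σ (-b)) := by rw [hgγ]
          _ = gammaPlus n σ := exp_Zb_gamma hσ0 (-b)
      have hbi : ∀ i, b i = u * c i := fun i => rfl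
      have hθτ' : σ * (u * u * (c ⬝ᵥ c)) = τ^2 := by rw [← hbb]; exact hθτ
      have h2 : ((Real.cosh τ - 1) / τ^2) * (σ * (u * u * (c ⬝ᵥ c))) = Real.cosh τ - 1 := by
        rw [hθτ', div_mul_cancel₀ _ (pow_ne_zero 2 hτne)]
      have h3 : d * ((Real.sinh τ / τ) * (σ * u)) = Real.cosh τ := by
        rw [hsinh, hu_def, hcosh]
        have h5 : Real.sqrt σ * C ≠ 0 := by positivity
        field_simp
        linear_combination (-e) * hσσ
      have hbr : 1 + ((Real.cosh τ - 1) / τ^2) * (σ * (u * u * (c ⬝ᵥ c)))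
          - d * ((Real.sinh τ / τ) * (σ * u)) = 0 := by
        rw [h2, h3]; ring
      have hkrow : ∀ j, k (Sum.inr ()) (Sum.inl j) = 0 := by
        intro j
        have hcr : ∀ i : Fin n, (replicateCol Unit (-b) * replicateRow Unit (-b)) i j = b i * b j := by
          intro i
          rw [Matrix.mul_apply]
          simp [replicateCol, replicateRow]
        have hE1 : ∀ i : Fin n, (NormedSpace.exp (Zb n σ (-b))) (Sum.inl i) (Sum.inl j) =
            (if i = j then 1 else 0) + ((Real.cosh τ - 1) / τ^2) * (σ * (b i * b j)) := by
          intro i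
          rw [hE, Zb_sq]
          simp only [Matrix.add_apply, Matrix.smul_apply, smul_eq_mul, Zb,
            fromBlocks_apply₁₁, Matrix.zero_apply, mul_zero, add_zero, Matrix.one_apply,
            Sum.inl.injEq]
          rw [hcr i]
        have hE2 : (NormedSpace.exp (Zb n σ (-b))) (Sum.inr ()) (Sum.inl j) =
            (Real.sinh τ / τ) * (σ * (-(b j))) := by
          rw [hE, Zb_sq]
          simp only [Matrix.add_apply, Matrix.smul_apply, smul_eq_mul, Zb,
            fromBlocks_apply₂₁, Matrix.zero_apply, mul_zero, add_zero, Matrix.one_apply,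
            Pi.smul_apply, Pi.neg_apply]
          simp [replicateRow, Matrix.one_apply]
        have hk1 : k (Sum.inr ()) (Sum.inl j) =
            ∑ i : Fin n, c i * ((if i = j then 1 else 0)
                + ((Real.cosh τ - 1) / τ^2) * (σ * (b i * b j)))
              + d * ((Real.sinh τ / τ) * (σ * (-(b j)))) := by
          rw [hk_def, Matrix.mul_apply, Fintype.sum_sum_type]
          congr 1
          · exact Finset.sum_congr rfl fun i _ => by rw [hE1 i]
          · simp only [Finset.univ_unique, Finset.sum_singleton]
            rw [hE2]
        rw [hk1]
        simp only [mul_add]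
        rw [Finset.sum_add_distrib]
        have t1 : ∑ i : Fin n, c i * (if i = j then 1 else 0) = c j := by
          simp [mul_ite]
        have t2 : ∑ i : Fin n, c i * (((Real.cosh τ - 1) / τ^2) * (σ * (b i * b j)))
            = (((Real.cosh τ - 1) / τ^2) * σ * u * u * c j) * (c ⬝ᵥ c) := by
          rw [dotProduct, Finset.mul_sum]
          refine Finset.sum_congr rfl fun i _ => ?_
          rw [hbi i, hbi j]
          ring
        rw [t1, t2, hbi j]
        linear_combination (c j) * hbr
      obtain ⟨R, ε, hR, hε, hkK⟩ := mem_K_of hσ0 k hkγ hkrow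
      exact ⟨k, ⟨R, ε, hR, hε, hkK⟩, Zb n σ b, Zb_mem b, hkg.symm⟩
  · rintro ⟨l, hl, k, ⟨R, ε, hR, hε, hk⟩, Z, ⟨b, hb⟩, ha⟩
    have hZ : Z = Zb n σ b := hb
    have hεε : ε * ε = 1 := by rcases hε with h | h <;> simp [h]
    set s := Real.sqrt l with hs_def
    have hs : 0 < s := Real.sqrt_pos.mpr hl
    have hss : s * s = l := Real.mul_self_sqrt hl.le
    set E := NormedSpace.exp Z with hE_def
    have hku : IsUnit k := by rw [hk]; exact K_isUnit R ε hR hεε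
    have hEu : IsUnit E := by
      rw [hE_def]
      exact Matrix.isUnit_exp Z
    have hsu : IsUnit ((s : ℝ) • (1 : Matrix (Idx n) (Idx n) ℝ)) := by
      refine isUnit_iff_exists.mpr ⟨s⁻¹ • 1, ?_, ?_⟩ <;>
      · rw [Matrix.smul_mul, Matrix.one_mul, smul_smul]
        first
        | rw [mul_inv_cancel₀ hs.ne', one_smul]
        | rw [inv_mul_cancel₀ hs.ne', one_smul]
    have hKg : kᵀ * gammaPlus n σ * k = gammaPlus n σ := by
      rw [hk]; exact K_gamma R ε hR hεε
    have hmain : Eᵀ * kᵀ * gammaPlus n σ * (k * E) = gammaPlus n σ := by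
      calc Eᵀ * kᵀ * gammaPlus n σ * (k * E)
          = Eᵀ * (kᵀ * gammaPlus n σ * k) * E := by simp only [mul_assoc]
        _ = Eᵀ * gammaPlus n σ * E := by rw [hKg]
        _ = gammaPlus n σ := by rw [hE_def, hZ]; exact exp_Zb_gamma hσ0 b
    have haunit : IsUnit a := by
      rw [ha]
      have : s • (k * E) = (s • (1 : Matrix (Idx n) (Idx n) ℝ)) * (k * E) := by
        rw [Matrix.smul_mul, Matrix.one_mul]
      rw [this]
      exact hsu.mul (hku.mul hEu)
    refine ⟨haunit, l, hl, ?_⟩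
    rw [ha, transpose_smul, transpose_mul, Matrix.smul_mul, Matrix.smul_mul,
      Matrix.mul_smul, smul_smul, hss, hmain]
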